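/- No explicit one-step Runge–Kutta method for retarded functional differential equations has uniform stage order two: Fix an integer s ≥ 2 and abscissae c_1, …, c_s ≥ 0 with c_1 = 0, and set c_{s+1} := 1. Suppose the tableau satisfies the one-step conditions u_i(α) = 1 and ã_{ij}(α) = 0 for all i, j and all α, and is explicit in its second row, i.e. a_{2j}(α) = 0 for all j ≥ 2. Then, with Γ_{2k}(α) := (1/(k−1)!)·[ (1−u_2(α))·(−1)^k/k + Σ_{j=1}^{s} ã_{2j}(α)·(−(1−c_j))^{k−1} + Σ_{j=1}^{s} a_{2j}(α)·c_j^{k−1} − α^k/k ], one has Γ_{2k}(α) = −α^k/k! for every integer k ≥ 2 and every α ∈ ℝ. In particular, if c_2 > 0 then Γ_{22}(α) = −α²/2 ≠ 0 for all α ∈ (0, c_2], so the uniform stage order two condition Γ_{22} ≡ 0 on [0,c_2] fails. -/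

import Mathlib

/-- The order polynomial `Γ_{ik}` of a TSRK method with `s` stages, for a row with
coefficient functions `u` (previous-values weight), `atil` (previous-step stage weights)
and `a` (current-step stage weights), with abscissae `c`. -/
noncomputable def GammaRow (s : ℕ) (c : Fin s → ℝ) (u : ℝ → ℝ) (atil a : Fin s → ℝ → ℝ)
    (k : ℕ) (α : ℝ) : ℝ :=
  (1 / (Nat.factorial (k - 1) : ℝ)) *
    ((1 - u α) * (-1) ^ k / k
      + (∑ j, atil j α * (-(1 - c j)) ^ (k - 1))
      + (∑ j, a j α * (c j) ^ (k - 1))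
      - α ^ k / k)

/-- No explicit one-step Runge–Kutta method for RFDEs has uniform stage order two:
under the one-step conditions `u_i ≡ 1`, `ã_{ij} ≡ 0` and explicitness of the second
row (`a_{2j} ≡ 0` for `j ≥ 2`), with `c₁ = 0`, the second-stage order polynomials are
`Γ_{2k}(α) = −α^k/k!` for all `k ≥ 2`; in particular, if `c₂ > 0` then
`Γ_{22}` does not vanish on `(0, c₂]`. -/
theorem one_step_rk_no_stage_order_two (s : ℕ) (hs : 2 ≤ s) (c : Fin s → ℝ)
    (hc : ∀ j, 0 ≤ c j) (hc1 : c ⟨0, by omega⟩ = 0)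
    (u : Fin (s + 1) → ℝ → ℝ) (atil a : Fin (s + 1) → Fin s → ℝ → ℝ)
    (hu : ∀ i α, u i α = 1) (hatil : ∀ i j α, atil i j α = 0)
    (ha2 : ∀ j : Fin s, 1 ≤ (j : ℕ) → ∀ α, a ⟨1, by omega⟩ j α = 0) :
    (∀ k : ℕ, 2 ≤ k → ∀ α : ℝ,
      GammaRow s c (u ⟨1, by omega⟩) (atil ⟨1, by omega⟩) (a ⟨1, by omega⟩) k α =
        -α ^ k / (Nat.factorial k : ℝ)) ∧
    (0 < c ⟨1, by omega⟩ → ∀ α ∈ Set.Ioc (0 : ℝ) (c ⟨1, by omega⟩),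
      GammaRow s c (u ⟨1, by omega⟩) (atil ⟨1, by omega⟩) (a ⟨1, by omega⟩) 2 α ≠ 0) := by
  have key : ∀ k : ℕ, 2 ≤ k → ∀ α : ℝ,
      GammaRow s c (u ⟨1, by omega⟩) (atil ⟨1, by omega⟩) (a ⟨1, by omega⟩) k α =
        -α ^ k / (Nat.factorial k : ℝ) := by
    intro k hk α
    have hsum2 : (∑ j, atil (⟨1, by omega⟩ : Fin (s+1)) j α * (-(1 - c j)) ^ (k - 1)) = 0 := by
      apply Finset.sum_eq_zero; intro j _; rw [hatil]; ring
    have hsum3 : (∑ j, a (⟨1, by omega⟩ : Fin (s+1)) j α * (c j) ^ (k - 1)) = 0 := by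
      apply Finset.sum_eq_zero; intro j _
      rcases j with ⟨jv, hjv⟩
      rcases Nat.eq_zero_or_pos jv with h | h
      · subst h; rw [hc1, zero_pow (by omega), mul_zero]
      · rw [ha2 ⟨jv, hjv⟩ h, zero_mul]
    unfold GammaRow
    rw [hu, hsum2, hsum3]
    have hfac : (Nat.factorial k : ℝ) = (Nat.factorial (k-1) : ℝ) * k := by
      rw [← Nat.mul_factorial_pred (show k ≠ 0 by omega)]; push_cast; ring
    have h1 : (Nat.factorial (k-1) : ℝ) ≠ 0 := Nat.cast_ne_zero.mpr (Nat.factorial_ne_zero _)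
    have h2 : (k : ℝ) ≠ 0 := Nat.cast_ne_zero.mpr (by omega)
    field_simp [hfac]
    rw [hfac]; ring
  refine ⟨key, ?_⟩
  intro _ α hα
  rw [key 2 le_rfl α]
  have h2 : α ^ 2 ≠ 0 := pow_ne_zero 2 (ne_of_gt hα.1)
  simp [Nat.factorial, div_eq_zero_iff, h2]
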